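/- If a hidden path ⟨j_0,0⟩,...,⟨j_{m-1},m−1⟩ exists with respect to an active node ⟨i,m⟩ in a run with f actual crash failures, then the processes j_0,...,j_{m−1} are m pairwise-distinct faulty processes; consequently m ≤ f, so in protocol Opt_0 all decisions are made by time f+1 at the latest. -/
import Mathlib


attribute [local instance] Classical.propDecidable

/-- An adversary in the synchronous crash-failure model: an input vector of binary
initial values, a failure pattern given by the delivery relation `F` (`F m j i` means
the message sent by `j` at time `m` is delivered to `i` at time `m+1`, i.e. in round `m+1`),
and a crash round for each process (`⊤` meaning the process never crashes).
A process behaves correctly before its crashing round and sends nothing afterwards;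
during its crashing round it may send to an arbitrary subset. -/
structure Adversary (n : ℕ) where
  init : Fin n → Bool
  F : ℕ → Fin n → Fin n → Prop
  crash : Fin n → ℕ∞
  crash_pos : ∀ j, 1 ≤ crash j
  before_crash : ∀ (m : ℕ) (j i : Fin n), ((m + 1 : ℕ) : ℕ∞) < crash j → F m j i
  after_crash : ∀ (m : ℕ) (j i : Fin n), crash j < ((m + 1 : ℕ) : ℕ∞) → ¬ F m j i

namespace Adversary

variable {n : ℕ}

/-- A process is faulty if it crashes at some point. -/
def Faulty (A : Adversary n) (j : Fin n) : Prop := A.crash j ≠ ⊤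

/-- The number `f` of actual failures in the run determined by the adversary. -/
noncomputable def numFaults (A : Adversary n) : ℕ := {j | A.Faulty j}.ncard

/-- A process is active at time `m` if it has not crashed before time `m`. -/
def Active (A : Adversary n) (j : Fin n) (m : ℕ) : Prop := ((m : ℕ) : ℕ∞) < A.crash j

end Adversary

/-- `Seen A ⟨j,ℓ⟩ ⟨i,m⟩`: node `⟨j,ℓ⟩` is in the view (communication graph) of node
`⟨i,m⟩`, i.e. there is a message chain from `⟨j,ℓ⟩` to `⟨i,m⟩`. -/
inductive Seen {n : ℕ} (A : Adversary n) : Fin n × ℕ → Fin n × ℕ → Prop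
  | refl (p : Fin n × ℕ) : Seen A p p
  | self {p : Fin n × ℕ} {i : Fin n} {m : ℕ} : Seen A p (i, m) → Seen A p (i, m + 1)
  | step {p : Fin n × ℕ} {j i : Fin n} {m : ℕ} : Seen A p (j, m) → A.F m j i →
      Seen A p (i, m + 1)

open Adversary

/-- Two adversaries give process `i` the same view at time `m` in a full-information
protocol: the same nodes are seen, with the same initial values at seen time-0 nodes
and the same incoming edges at seen later nodes. -/
def sameView {n : ℕ} (A B : Adversary n) (i : Fin n) (m : ℕ) : Prop :=
  (∀ p, Seen A p (i, m) ↔ Seen B p (i, m)) ∧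
  (∀ j, Seen A (j, 0) (i, m) → A.init j = B.init j) ∧
  (∀ (k : ℕ) (j j' : Fin n), Seen A (j', k + 1) (i, m) → (A.F k j j' ↔ B.F k j j'))

/-- The local state of (active) process `i` at time `m` is the same under both
adversaries: `i` is active in both and has the same full-information view. -/
def sameLocal {n : ℕ} (A B : Adversary n) (i : Fin n) (m : ℕ) : Prop :=
  A.Active i m ∧ B.Active i m ∧ sameView A B i m

/-- The runs of the system are those generated by adversaries with at most `t` crashes. -/
def Valid {n : ℕ} (t : ℕ) (A : Adversary n) : Prop := A.numFaults ≤ t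

/-- Knowledge in the full-information protocol: `i` knows the fact `φ` at time `m`
iff `φ` holds at time `m` in every run (with at most `t` failures) in which `i` has
the same local state. -/
def Knows {n : ℕ} (t : ℕ) (φ : Adversary n → ℕ → Prop) (A : Adversary n) (i : Fin n)
    (m : ℕ) : Prop :=
  ∀ B : Adversary n, Valid t B → sameLocal A B i m → φ B m

/-- The fact `∃v`: some process has initial value `v`. -/
def existsVal {n : ℕ} (v : Bool) : Adversary n → ℕ → Prop := fun A _ => ∃ j, A.init j = v

/-- Node `⟨j',m'⟩` is revealed to `⟨i,m⟩`: either it is seen by `⟨i,m⟩`, or for some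
seen node `⟨i',m'⟩` the edge `(⟨j',m'-1⟩,⟨i',m'⟩)` is absent from `i`'s view
(proving that `j'` crashed before time `m'`). -/
def RevealedNode {n : ℕ} (A : Adversary n) (j' : Fin n) (m' : ℕ) (i : Fin n) (m : ℕ) :
    Prop :=
  Seen A (j', m') (i, m) ∨
  ∃ (i' : Fin n) (k : ℕ), m' = k + 1 ∧ Seen A (i', k + 1) (i, m) ∧ ¬ A.F k j' i'

/-- Time `k` is revealed to `⟨i,m⟩` if every node `⟨j',k⟩` is revealed to `⟨i,m⟩`. -/
def RevealedTime {n : ℕ} (A : Adversary n) (k : ℕ) (i : Fin n) (m : ℕ) : Prop :=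
  ∀ j', RevealedNode A j' k i m

/-- A hidden path w.r.t. `⟨i,m⟩`: for each `k ≤ m` a node `⟨j_k,k⟩` not revealed to `⟨i,m⟩`. -/
def HiddenPath {n : ℕ} (A : Adversary n) (i : Fin n) (m : ℕ) : Prop :=
  ∃ js : ℕ → Fin n, ∀ k ≤ m, ¬ RevealedNode A (js k) k i m

/-- `not-known(∃0)`: no process active at time `m` knows `∃0`. -/
def notKnown0 {n : ℕ} (t : ℕ) : Adversary n → ℕ → Prop :=
  fun A m => ∀ j, A.Active j m → ¬ Knows t (existsVal false) A j m

/-- A (full-information, deterministic) decision protocol, described by the decision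
status function: `P A i m = some v` iff by time `m` process `i` has decided `v`
in the run determined by adversary `A`. -/
abbrev ProtoDec (n : ℕ) : Type := Adversary n → Fin n → ℕ → Option Bool

/-- Sanity conditions making a decision-status function a protocol: decisions are
irrevocable, and (for active processes) depend only on the local state. -/
def IsProtocol {n : ℕ} (t : ℕ) (P : ProtoDec n) : Prop :=
  (∀ A i m v, P A i m = some v → P A i (m + 1) = some v) ∧
  (∀ A B i m, Valid t A → Valid t B → sameLocal A B i m → P A i m = P B i m)

/-- Process `i` performs the action `decide(v)` at time `m`: it is decided on `v`
at `m` and was undecided before. -/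
def DecidesAt {n : ℕ} (P : ProtoDec n) (A : Adversary n) (i : Fin n) (m : ℕ) (v : Bool) :
    Prop :=
  P A i m = some v ∧ ∀ k < m, P A i k = none

/-- Decision: every correct process eventually decides. -/
def Decision {n : ℕ} (t : ℕ) (P : ProtoDec n) : Prop :=
  ∀ A : Adversary n, Valid t A → ∀ i, ¬ A.Faulty i → ∃ m, P A i m ≠ none

/-- Validity: if all initial values are `v` then correct processes decide `v`. -/
def Validity {n : ℕ} (t : ℕ) (P : ProtoDec n) : Prop :=
  ∀ A : Adversary n, Valid t A → ∀ v : Bool, (∀ j, A.init j = v) →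
    ∀ i m w, ¬ A.Faulty i → P A i m = some w → w = v

/-- Agreement: all correct processes decide on the same value. -/
def Agreement {n : ℕ} (t : ℕ) (P : ProtoDec n) : Prop :=
  ∀ A : Adversary n, Valid t A → ∀ i j m m' v w, ¬ A.Faulty i → ¬ A.Faulty j →
    P A i m = some v → P A j m' = some w → v = w

def ConsensusSolves {n : ℕ} (t : ℕ) (P : ProtoDec n) : Prop :=
  Decision t P ∧ Validity t P ∧ Agreement t P

/-- Uniform Agreement: all processes that decide (faulty or not) decide the same value. -/
def UniformAgreement {n : ℕ} (t : ℕ) (P : ProtoDec n) : Prop :=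
  ∀ A : Adversary n, Valid t A → ∀ i j m m' v w,
    P A i m = some v → P A j m' = some w → v = w

def UniformConsensusSolves {n : ℕ} (t : ℕ) (P : ProtoDec n) : Prop :=
  Decision t P ∧ Validity t P ∧ UniformAgreement t P

/-- `Q` dominates `P`: for every adversary and process, if `i` has decided by time `m`
in `P` then `i` has decided by time `m` in `Q`. -/
def Dominates {n : ℕ} (t : ℕ) (Q P : ProtoDec n) : Prop :=
  ∀ A : Adversary n, Valid t A → ∀ i m, P A i m ≠ none → Q A i m ≠ none

def StrictlyDominates {n : ℕ} (t : ℕ) (Q P : ProtoDec n) : Prop :=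
  Dominates t Q P ∧ ¬ Dominates t P Q

/-- Turn a per-time decision rule into a decision-status function (the first decision
taken is kept forever). -/
def runDec (step : ℕ → Option Bool) : ℕ → Option Bool
  | 0 => step 0
  | m + 1 => (runDec step m).elim (step (m + 1)) some

/-- The protocol `P₀`: decide 0 as soon as `K_i ∃0` holds, otherwise decide 1 at time `t+1`. -/
noncomputable def P0 (n t : ℕ) : ProtoDec n := fun A i =>
  runDec fun m =>
    if Knows t (existsVal false) A i m then some false
    else if m = t + 1 then some true
    else none

/-- The unbeatable protocol `Opt₀`: decide 0 as soon as `K_i ∃0` holds, and decide 1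
as soon as `K_i not-known(∃0)` holds. -/
noncomputable def Opt0 (n t : ℕ) : ProtoDec n := fun A i =>
  runDec fun m =>
    if Knows t (existsVal false) A i m then some false
    else if Knows t (notKnown0 t) A i m then some true
    else none

/-- The number of processes with initial value `false` (0). -/
noncomputable def zeros {n : ℕ} (A : Adversary n) : ℕ :=
  (Finset.univ.filter fun j => A.init j = false).card

/-- The number of processes with initial value `true` (1). -/
noncomputable def ones {n : ℕ} (A : Adversary n) : ℕ :=
  (Finset.univ.filter fun j => A.init j = true).card

/-- The fact `Maj = 0`: at least `n/2` initial values are 0. -/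
def Maj0 (n : ℕ) : Adversary n → ℕ → Prop := fun A _ => n ≤ 2 * zeros A

/-- The fact `Maj = 1`: strictly more than `n/2` initial values are 1. -/
def Maj1 (n : ℕ) : Adversary n → ℕ → Prop := fun A _ => n < 2 * ones A

noncomputable def seenZeros {n : ℕ} (A : Adversary n) (i : Fin n) (m : ℕ) : ℕ :=
  (Finset.univ.filter fun j => Seen A (j, 0) (i, m) ∧ A.init j = false).card

noncomputable def seenOnes {n : ℕ} (A : Adversary n) (i : Fin n) (m : ℕ) : ℕ :=
  (Finset.univ.filter fun j => Seen A (j, 0) (i, m) ∧ A.init j = true).card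

/-- `Maj(vals(i,m))`: 0 if at least half of the initial values known to `i` at `m`
are 0, and 1 otherwise. -/
noncomputable def MajSeen {n : ℕ} (A : Adversary n) (i : Fin n) (m : ℕ) : Bool :=
  if seenOnes A i m ≤ seenZeros A i m then false else true

/-- The unbeatable majority consensus protocol `Opt_Maj`. -/
noncomputable def OptMaj (n t : ℕ) : ProtoDec n := fun A i =>
  runDec fun m =>
    if Knows t (Maj0 n) A i m then some false
    else if Knows t (Maj1 n) A i m then some true
    else if ∃ k ≤ m, RevealedTime A k i m then some (MajSeen A i m)
    else none

/-- The fact `∀1`: all initial values are 1. -/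
def all1 (n : ℕ) : Adversary n → ℕ → Prop := fun A _ => ∀ j, A.init j = true

/-- The sender set of `i` repeats at `⟨i,m⟩`: `i` hears from the same set of processes
in rounds `m-1` and `m` (only meaningful for `m ≥ 2`). -/
def senderSetRepeats {n : ℕ} (A : Adversary n) (i : Fin n) (m : ℕ) : Prop :=
  ∀ j, (A.F (m - 2) j i ↔ A.F (m - 1) j i)

/-- The protocol `P0_opt` of Halpern, Moses and Waarts. -/
noncomputable def P0opt (n t : ℕ) : ProtoDec n := fun A i =>
  runDec fun m =>
    if Knows t (existsVal false) A i m then some false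
    else if Knows t (all1 n) A i m ∨ (2 ≤ m ∧ senderSetRepeats A i m) then some true
    else none

/-- The fact `∃correct(v)`: some correct (never-failing) process knows `∃v`. -/
def ExistsCorrectKnows {n : ℕ} (t : ℕ) (v : Bool) : Adversary n → ℕ → Prop :=
  fun A m => ∃ j, ¬ A.Faulty j ∧ Knows t (existsVal v) A j m

/-- The number `d` of failures process `i` knows of at time `m`: the number of
processes `j ≠ i` from which `i` receives no message in round `m`. -/
noncomputable def knownFaults {n : ℕ} (A : Adversary n) (i : Fin n) : ℕ → ℕ
  | 0 => 0
  | m + 1 => (Finset.univ.filter fun j => j ≠ i ∧ ¬ A.F m j i).card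

/-- The protocol `u-P₀` for uniform consensus: decide 0 as soon as
`K_i ∃correct(0)` holds, otherwise decide 1 at time `t+1`. -/
noncomputable def uP0 (n t : ℕ) : ProtoDec n := fun A i =>
  runDec fun m =>
    if Knows t (ExistsCorrectKnows t false) A i m then some false
    else if m = t + 1 then some true
    else none

/-- The unbeatable uniform consensus protocol `u-Opt₀`. -/
noncomputable def uOpt0 (n t : ℕ) : ProtoDec n := fun A i =>
  runDec fun m =>
    if Knows t (ExistsCorrectKnows t false) A i m then some false
    else if ¬ Knows t (existsVal false) A i m ∧ ∃ k ≤ m, RevealedTime A k i m then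
      some true
    else none

/-- All decisions in the run `P[A]` are taken at or before time `m`. -/
def AllDecidedBy {n : ℕ} (P : ProtoDec n) (A : Adversary n) (m : ℕ) : Prop :=
  ∀ i k, P A i k ≠ none → P A i m ≠ none

/-- `Q` last-decider dominates `P`. -/
def LDDominates {n : ℕ} (t : ℕ) (Q P : ProtoDec n) : Prop :=
  ∀ A : Adversary n, Valid t A → ∀ m, AllDecidedBy P A m → AllDecidedBy Q A m

/-- A 0-chain for `⟨i,m⟩`: distinct processes `j₀,…,j_d = i` with `d ≤ m`, `j₀` having
initial value 0, and `j_k` receiving a message from `j_{k-1}` at time `k` (round `k`). -/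
def ZeroChain {n : ℕ} (A : Adversary n) (i : Fin n) (m : ℕ) : Prop :=
  ∃ d ≤ m, ∃ js : ℕ → Fin n, js d = i ∧
    (∀ k ≤ d, ∀ l ≤ d, js k = js l → k = l) ∧
    A.init (js 0) = false ∧
    ∀ k, 1 ≤ k → k ≤ d → A.F (k - 1) (js (k - 1)) (js k)

section HiddenAux

variable {n : ℕ}

lemma seen_time_le {A : Adversary n} {p q : Fin n × ℕ} (h : Seen A p q) : p.2 ≤ q.2 := by
  induction h with
  | refl => exact le_refl _
  | self _ ih => exact ih.trans (Nat.le_succ _)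
  | step _ _ ih => exact ih.trans (Nat.le_succ _)

lemma seen_self {A : Adversary n} (i : Fin n) {k m : ℕ} (h : k ≤ m) :
    Seen A (i, k) (i, m) := by
  induction m with
  | zero =>
    have : k = 0 := Nat.le_zero.mp h
    subst this; exact Seen.refl _
  | succ m ih =>
    rcases Nat.eq_or_lt_of_le h with h' | h'
    · subst h'; exact Seen.refl _
    · exact Seen.self (ih (Nat.lt_succ_iff.mp h'))

lemma seen_trans {A : Adversary n} {p q r : Fin n × ℕ} (h1 : Seen A p q)
    (h2 : Seen A q r) : Seen A p r := by
  induction h2 with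
  | refl => exact h1
  | self _ ih => exact Seen.self ih
  | step _ hF ih => exact Seen.step ih hF

lemma seen_active {A : Adversary n} {p q : Fin n × ℕ} (h : Seen A p q)
    (hq : A.Active q.1 q.2) : A.Active p.1 p.2 := by
  induction h with
  | refl => exact hq
  | @self i m h ih =>
    apply ih
    have h1 : ((m : ℕ) : ℕ∞) < (((m + 1 : ℕ)) : ℕ∞) := by
      exact_mod_cast Nat.lt_succ_self m
    exact lt_trans h1 hq
  | @step j i m h hF ih =>
    apply ih
    show ((m : ℕ) : ℕ∞) < A.crash j
    by_contra hc
    push_neg at hc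
    have h1 : ((m : ℕ) : ℕ∞) < (((m + 1 : ℕ)) : ℕ∞) := by
      exact_mod_cast Nat.lt_succ_self m
    exact A.after_crash m j i (lt_of_le_of_lt hc h1) hF

lemma seen_through {A : Adversary n} {p q : Fin n × ℕ} (h : Seen A p q) {k : ℕ}
    (h1 : p.2 ≤ k) (h2 : k ≤ q.2) :
    ∃ j', Seen A p (j', k) ∧ Seen A (j', k) q := by
  induction h with
  | refl =>
    have hk : k = p.2 := le_antisymm h2 h1
    subst hk
    exact ⟨p.1, Seen.refl p, Seen.refl p⟩
  | @self i m h ih =>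
    have h2' : k ≤ m + 1 := h2
    rcases Nat.eq_or_lt_of_le h2' with he | hl
    · subst he
      exact ⟨i, Seen.self h, Seen.refl _⟩
    · obtain ⟨j', s1, s2⟩ := ih (Nat.lt_succ_iff.mp hl)
      exact ⟨j', s1, Seen.self s2⟩
  | @step j i m h hF ih =>
    have h2' : k ≤ m + 1 := h2
    rcases Nat.eq_or_lt_of_le h2' with he | hl
    · subst he
      exact ⟨i, Seen.step h hF, Seen.refl _⟩
    · obtain ⟨j', s1, s2⟩ := ih (Nat.lt_succ_iff.mp hl)
      exact ⟨j', s1, Seen.step s2 hF⟩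

lemma seen_of_F_eq {A B : Adversary n} (hF : A.F = B.F) {p q : Fin n × ℕ}
    (h : Seen A p q) : Seen B p q := by
  induction h with
  | refl => exact Seen.refl _
  | self _ ih => exact Seen.self ih
  | step _ hf ih => exact Seen.step ih (hF ▸ hf)

lemma hidden_crash {A : Adversary n} {j i : Fin n} {k m : ℕ} (hk : k < m)
    (h : ¬ RevealedNode A j k i m) : A.crash j ≤ ((k + 1 : ℕ) : ℕ∞) := by
  by_contra hc
  push_neg at hc
  apply h
  left
  exact seen_trans (Seen.step (Seen.refl (j, k)) (A.before_crash k j i hc))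
    (seen_self i hk)

lemma hidden_notF {A : Adversary n} {j i : Fin n} {k m : ℕ} (hk : k < m)
    (h : ¬ RevealedNode A j k i m) : ¬ A.F k j i := fun hF =>
  h (Or.inl (seen_trans (Seen.step (Seen.refl (j, k)) hF) (seen_self i hk)))

/-- The main combinatorial lemma: a hidden path yields `m` pairwise-distinct faulty
processes, hence `m ≤ f`. -/
lemma hidden_main {A : Adversary n} {i : Fin n} {m : ℕ} (js : ℕ → Fin n)
    (hjs : ∀ k < m, ¬ RevealedNode A (js k) k i m) :
    (∀ k < m, A.Faulty (js k)) ∧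
    (∀ k l, k < m → l < m → js k = js l → k = l) ∧
    m ≤ A.numFaults := by
  have hfault : ∀ k < m, A.Faulty (js k) := by
    intro k hk
    have hcr := hidden_crash hk (hjs k hk)
    intro htop
    rw [htop] at hcr
    rw [top_le_iff] at hcr
    exact ENat.coe_ne_top _ hcr
  have key : ∀ k l, k < l → l < m → js k ≠ js l := by
    intro k l hkl hlm heq
    have hkm : k < m := hkl.trans hlm
    have hcr := hidden_crash hkm (hjs k hkm)
    apply hjs l hlm
    right
    rcases Nat.lt_or_ge (k + 1) l with hl2 | hl2
    · have hl1 : l - 1 + 1 = l := by omega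
      refine ⟨i, l - 1, hl1.symm, ?_, ?_⟩
      · rw [hl1]; exact seen_self i hlm.le
      · apply A.after_crash
        rw [← heq]
        refine lt_of_le_of_lt hcr ?_
        exact_mod_cast (by omega : k + 1 < l - 1 + 1)
    · have hl1 : l = k + 1 := by omega
      subst hl1
      exact ⟨i, k, rfl, seen_self i hlm.le,
        by rw [← heq]; exact hidden_notF hkm (hjs k hkm)⟩
  have hdist : ∀ k l, k < m → l < m → js k = js l → k = l := by
    intro k l hk hl he
    rcases lt_trichotomy k l with h | h | h
    · exact absurd he (key k l h hl)
    · exact h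
    · exact absurd he.symm (key l k h hk)
  refine ⟨hfault, hdist, ?_⟩
  have hinj : Set.InjOn js (Set.Iio m) := fun k hk l hl he => hdist k l hk hl he
  have himg : js '' Set.Iio m ⊆ {j | A.Faulty j} := by
    rintro _ ⟨k, hk, rfl⟩
    exact hfault k hk
  have h1 : (Set.Iio m).ncard = m := by
    rw [← Finset.coe_Iio, Set.ncard_coe_finset, Nat.card_Iio]
  have h2 : (js '' Set.Iio m).ncard = m := by
    rw [Set.ncard_image_of_injOn hinj, h1]
  have h3 := Set.ncard_le_ncard himg (Set.toFinite _)
  rw [h2] at h3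
  exact h3

/-- If process `j` is active and knows `∃0`, then it has seen a `0`. -/
lemma knows0_seen_zero {t : ℕ} {B : Adversary n} (hB : Valid t B) {j : Fin n} {m : ℕ}
    (hact : B.Active j m) (hK : Knows t (existsVal false) B j m) :
    ∃ j0, Seen B (j0, 0) (j, m) ∧ B.init j0 = false := by
  classical
  set B' : Adversary n :=
    { B with init := fun j0 => if Seen B (j0, 0) (j, m) then B.init j0 else true }
    with hB'
  have hFeq : B.F = B'.F := rfl
  have hB'valid : Valid t B' := hB
  have hview : sameView B B' j m := by
    refine ⟨fun p => ⟨seen_of_F_eq hFeq, seen_of_F_eq hFeq.symm⟩, ?_, fun _ _ _ _ => Iff.rfl⟩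
    intro j0 hs
    show B.init j0 = if Seen B (j0, 0) (j, m) then B.init j0 else true
    rw [if_pos hs]
  obtain ⟨j0, h0⟩ := hK B' hB'valid ⟨hact, hact, hview⟩
  by_cases hs : Seen B (j0, 0) (j, m)
  · refine ⟨j0, hs, ?_⟩
    have : B'.init j0 = B.init j0 := if_pos hs
    rw [← this]; exact h0
  · exfalso
    have : B'.init j0 = true := if_neg hs
    rw [this] at h0
    exact Bool.noConfusion h0

lemma knows0_of_seen {t : ℕ} {A : Adversary n} {i j0 : Fin n} {m : ℕ}
    (hs : Seen A (j0, 0) (i, m)) (h0 : A.init j0 = false) :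
    Knows t (existsVal false) A i m := by
  intro C _ hloc
  refine ⟨j0, ?_⟩
  rw [← hloc.2.2.2.1 j0 hs]
  exact h0

end HiddenAux

/-- A hidden path `⟨j₀,0⟩,…,⟨j_{m-1},m-1⟩` w.r.t. an active node `⟨i,m⟩` consists of `m`
pairwise-distinct faulty processes, so `m ≤ f`; consequently in `Opt₀` all decisions are
made by time `f+1` at the latest. -/
theorem hidden_path_faulty_distinct_and_opt0_stops_by_f_plus_one (n t : ℕ) (ht : t < n) :
    (∀ A : Adversary n, Valid t A → ∀ (i : Fin n) (m : ℕ), A.Active i m →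
      ∀ js : ℕ → Fin n, (∀ k < m, ¬ RevealedNode A (js k) k i m) →
        (∀ k < m, A.Faulty (js k)) ∧
        (∀ k l, k < m → l < m → js k = js l → k = l) ∧
        m ≤ A.numFaults) ∧
    (∀ A : Adversary n, Valid t A → ∀ i : Fin n, A.Active i (A.numFaults + 1) →
      Opt0 n t A i (A.numFaults + 1) ≠ none) := by
  constructor
  · intro A _ i m _ js hjs
    exact hidden_main js hjs
  · intro A hA i hact
    -- there is a revealed time ≤ f+1 (otherwise a hidden path would give f+1 ≤ f)
    have hrev : ∃ k ≤ A.numFaults + 1, RevealedTime A k i (A.numFaults + 1) := by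
      by_contra hc
      push_neg at hc
      have h2 : ∀ k, ∃ j', k < A.numFaults + 1 →
          ¬ RevealedNode A j' k i (A.numFaults + 1) := by
        intro k
        by_cases hk : k < A.numFaults + 1
        · have := hc k hk.le
          unfold RevealedTime at this
          push_neg at this
          obtain ⟨j', hj'⟩ := this
          exact ⟨j', fun _ => hj'⟩
        · exact ⟨i, fun h => absurd h hk⟩
      choose js hjs using h2
      have := (hidden_main js (fun k hk => hjs k hk)).2.2
      omega
    set step : ℕ → Option Bool := fun m =>
      if Knows t (existsVal false) A i m then some false
      else if Knows t (notKnown0 t) A i m then some true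
      else none with hstep
    have hO : Opt0 n t A i (A.numFaults + 1) =
        (runDec step A.numFaults).elim (step (A.numFaults + 1)) some := rfl
    have hstep1 : step (A.numFaults + 1) ≠ none := by
      by_cases hK0 : Knows t (existsVal false) A i (A.numFaults + 1)
      · simp [hstep, hK0]
      · have hK1 : Knows t (notKnown0 t) A i (A.numFaults + 1) := by
          intro B hB hloc j hjact hKj
          obtain ⟨k, hkle, hrevk⟩ := hrev
          obtain ⟨j0, hseen0, hinit0⟩ := knows0_seen_zero hB hjact hKj
          obtain ⟨j', s1, s2⟩ := seen_through hseen0 (Nat.zero_le k) hkle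
          rcases hrevk j' with hseenA | ⟨i', k'', hk'', hsA, hnF⟩
          · -- seen case: i sees the 0, so i knows ∃0, contradiction
            have hseenB : Seen B (j', k) (i, A.numFaults + 1) :=
              (hloc.2.2.1 _).mp hseenA
            have hB0 : Seen B (j0, 0) (i, A.numFaults + 1) := seen_trans s1 hseenB
            have hA0 : Seen A (j0, 0) (i, A.numFaults + 1) := (hloc.2.2.1 _).mpr hB0
            have hA0v : A.init j0 = false := by
              rw [hloc.2.2.2.1 j0 hA0]
              exact hinit0
            exact hK0 (knows0_of_seen hA0 hA0v)
          · -- crashed case: j' is proven crashed, contradicting the active chain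
            subst hk''
            have hnFB : ¬ B.F k'' j' i' := fun h =>
              hnF ((hloc.2.2.2.2 k'' j' i' hsA).mpr h)
            have hcr : B.crash j' ≤ ((k'' + 1 : ℕ) : ℕ∞) := by
              by_contra hcc
              push_neg at hcc
              exact hnFB (B.before_crash _ _ _ hcc)
            have hactj' : B.Active j' (k'' + 1) := seen_active s2 hjact
            exact absurd hcr (not_le.mpr hactj')
        simp [hstep, hK0, hK1]
    rw [hO]
    cases h : runDec step A.numFaults with
    | none => simpa using hstep1
    | some v => simp
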